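/- arXiv:1707.03281 — 8 statements merged into one kernel-verified Lean document; each statement's English description precedes it below -/
import Mathlib

section
/- Let X be a first countable topological space and I a P-ideal on ω. If a sequence (x_n) in X is I-convergent to ℓ, then (x_n) is I*-convergent to ℓ, i.e., there exists A ∈ I* such that the subsequence of (x_n) indexed by A converges to ℓ in the ordinary sense. -/
open Filter Topology

/-- An ideal on ω: closed under subsets and finite unions, contains all singletons,
and is not the whole power set. -/
def IsIdeal (I : Set (Set ℕ)) : Prop :=
  (∀ ⦃A B : Set ℕ⦄, A ∈ I → B ⊆ A → B ∈ I) ∧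
  (∀ ⦃A B : Set ℕ⦄, A ∈ I → B ∈ I → A ∪ B ∈ I) ∧
  (∀ n : ℕ, ({n} : Set ℕ) ∈ I) ∧ (Set.univ : Set ℕ) ∉ I

/-- A P-ideal. -/
def IsPIdeal (I : Set (Set ℕ)) : Prop :=
  IsIdeal I ∧ ∀ A : ℕ → Set ℕ, (∀ n, A n ∈ I) → ∃ B ∈ I, ∀ n, (A n \ B).Finite

/-- A G-ideal. -/
def IsGIdeal (I : Set (Set ℕ)) : Prop :=
  IsIdeal I ∧ ∀ a : ℕ → ℕ, StrictMono a → (Set.range a)ᶜ ∈ I →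
    ∀ B : Set ℕ, ((a '' B)ᶜ ∈ I ↔ Bᶜ ∈ I)

variable {X : Type*} [TopologicalSpace X]

/-- `I`-convergence of a sequence to a point. -/
def IConv (I : Set (Set ℕ)) (x : ℕ → X) (l : X) : Prop :=
  ∀ U ∈ 𝓝 l, {n | x n ∉ U} ∈ I

/-- `I*`-convergence: some subsequence indexed by a set of the dual filter converges. -/
def IStarConv (I : Set (Set ℕ)) (x : ℕ → X) (l : X) : Prop :=
  ∃ e : ℕ → ℕ, StrictMono e ∧ (Set.range e)ᶜ ∈ I ∧ Tendsto (x ∘ e) atTop (𝓝 l)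

/-- The set of `I`-cluster points of a sequence. -/
def IClusterPts (I : Set (Set ℕ)) (x : ℕ → X) : Set X :=
  {l | ∀ U ∈ 𝓝 l, {n | x n ∈ U} ∉ I}

/-- The set of `I`-limit points of a sequence. -/
def ILimitPts (I : Set (Set ℕ)) (x : ℕ → X) : Set X :=
  {l | ∃ e : ℕ → ℕ, StrictMono e ∧ Set.range e ∉ I ∧ Tendsto (x ∘ e) atTop (𝓝 l)}

theorem stmt3 {X : Type*} [TopologicalSpace X] [FirstCountableTopology X]
    {I : Set (Set ℕ)} (hI : IsPIdeal I) {x : ℕ → X} {l : X}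
    (h : IConv I x l) : IStarConv I x l := by
  obtain ⟨hsub, hun, hsing, hnuniv⟩ := hI.1
  -- finite sets in I
  have hfin : ∀ S : Set ℕ, S.Finite → S ∈ I := by
    intro S hS
    refine Set.Finite.induction_on S hS (hsub (hsing 0) (Set.empty_subset _)) ?_
    intro a s _ _ ih
    rw [Set.insert_eq]
    exact hun (hsing a) ih
  obtain ⟨U, hU⟩ := (𝓝 l).exists_antitone_basis
  set A : ℕ → Set ℕ := fun k => {n | x n ∉ U k} with hA
  have hAI : ∀ k, A k ∈ I := fun k => h _ (hU.mem k)
  obtain ⟨B, hBI, hBfin⟩ := hI.2 A hAI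
  have hBc : Bᶜ.Infinite := by
    intro hf
    apply hnuniv
    have : (Set.univ : Set ℕ) = B ∪ Bᶜ := by simp
    rw [this]
    exact hun hBI (hfin _ hf)
  set p : ℕ → Prop := fun n => n ∈ Bᶜ with hp
  have hpe : setOf p = Bᶜ := rfl
  have hpinf : (setOf p).Infinite := by rw [hpe]; exact hBc
  refine ⟨Nat.nth p, Nat.nth_strictMono hpinf, ?_, ?_⟩
  · rw [Nat.range_nth_of_infinite hpinf]; change (setOf p)ᶜ ∈ I; rw [hpe, compl_compl]; exact hBI
  · rw [hU.1.tendsto_right_iff]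
    intro k _
    have hAk : (A k ∩ Bᶜ).Finite := by
      have := hBfin k
      rwa [Set.diff_eq] at this
    rcases hAk.bddAbove with ⟨N, hN⟩
    have htop : Tendsto (Nat.nth p) atTop atTop :=
      (Nat.nth_strictMono hpinf).tendsto_atTop
    filter_upwards [htop.eventually_gt_atTop N] with m hm
    have hmem : Nat.nth p m ∈ Bᶜ := Nat.nth_mem_of_infinite hpinf m
    by_contra hx
    exact absurd (hN ⟨hx, hmem⟩) (not_le.mpr hm)
end

section
/- Let I be a G-ideal on ω and X a topological space. A sequence (x_n) in X is I-convergent to ℓ if and only if there exists a set A ∈ I* such that, writing A = {n_1 < n_2 < ...}, the subsequence (x_{n_k})_k is I-convergent to ℓ. -/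
open Filter Topology

variable {X : Type*} [TopologicalSpace X]

theorem stmt4 {X : Type*} [TopologicalSpace X] {I : Set (Set ℕ)} (hI : IsGIdeal I)
    {x : ℕ → X} {l : X} :
    IConv I x l ↔
      ∃ e : ℕ → ℕ, StrictMono e ∧ (Set.range e)ᶜ ∈ I ∧ IConv I (x ∘ e) l := by
  obtain ⟨⟨hsub, hunion, hsing, huniv⟩, hG⟩ := hI
  constructor
  · intro h
    refine ⟨id, strictMono_id, ?_, h⟩
    have : (Set.range (id : ℕ → ℕ))ᶜ = ∅ := by simp
    rw [this]
    exact hsub (hsing 0) (Set.empty_subset _)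
  · rintro ⟨e, he, hre, hconv⟩
    intro U hU
    have hB : {k | x (e k) ∉ U} ∈ I := hconv U hU
    set B := {k | x (e k) ∉ U}
    have himg : e '' B ∈ I := by
      have := (hG e he hre Bᶜ).mpr (by rwa [compl_compl])
      refine hsub this ?_
      intro n hn
      rintro ⟨k, hk, rfl⟩
      obtain ⟨k', hk', hkk'⟩ := hn
      exact hk (he.injective hkk' ▸ hk')
    have hsubset : {n | x n ∉ U} ⊆ (Set.range e)ᶜ ∪ e '' B := by
      intro n hn
      by_cases hr : n ∈ Set.range e
      · obtain ⟨k, rfl⟩ := hr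
        exact Or.inr ⟨k, hn, rfl⟩
      · exact Or.inl hr
    exact hsub (hunion hre himg) hsubset
end

section
/- Let I be a P-ideal on ω, G a metrizable topological additive group, and (x_n) a sequence in G that is I-convergent to ℓ. Then there exist sequences (y_n) and (z_n) in G such that x_n = y_n + z_n for all n, (y_n) converges to ℓ in the ordinary sense, and {n : z_n ≠ 0} ∈ I. -/
open Filter Topology

variable {X : Type*} [TopologicalSpace X]

theorem stmt5 {G : Type*} [AddGroup G] [TopologicalSpace G] [IsTopologicalAddGroup G]
    [TopologicalSpace.MetrizableSpace G] {I : Set (Set ℕ)} (hI : IsPIdeal I)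
    {x : ℕ → G} {l : G} (h : IConv I x l) :
    ∃ y z : ℕ → G, (∀ n, x n = y n + z n) ∧
      Filter.Tendsto y Filter.atTop (𝓝 l) ∧ {n | z n ≠ 0} ∈ I := by
  letI : MetricSpace G := TopologicalSpace.metrizableSpaceMetric G
  classical
  set A : ℕ → Set ℕ := fun k => {n | x n ∉ Metric.ball l (1 / (k + 1))} with hA
  have hAI : ∀ k, A k ∈ I := fun k =>
    h _ (Metric.ball_mem_nhds l (by positivity))
  obtain ⟨B, hBI, hBfin⟩ := hI.2 A hAI
  refine ⟨fun n => if n ∈ B then l else x n, fun n => -(if n ∈ B then l else x n) + x n,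
    fun n => by simp, ?_, ?_⟩
  · rw [Metric.tendsto_atTop]
    intro ε hε
    obtain ⟨k, hk⟩ := exists_nat_one_div_lt hε
    obtain ⟨N, hN⟩ := (hBfin k).bddAbove
    refine ⟨N + 1, fun n hn => ?_⟩
    by_cases hnB : n ∈ B
    · simp [hnB, hε]
    · simp only [hnB, if_false]
      have hnA : n ∉ A k := by
        intro hnA
        exact absurd (hN ⟨hnA, hnB⟩) (by omega)
      simp only [hA, Set.mem_setOf_eq, not_not, Metric.mem_ball] at hnA
      calc dist (x n) l < 1 / (k + 1) := hnA
        _ < ε := hk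
  · apply hI.1.1 hBI
    intro n hn
    by_contra hnB
    simp [hnB] at hn
end

section
/- Let X be a topological space, I an ideal on ω, and x, y sequences in X with {n : x_n ≠ y_n} ∈ I. Then x and y have the same I-limit points and the same I-cluster points: Λ_x(I) = Λ_y(I) and Γ_x(I) = Γ_y(I). -/
open Filter Topology

variable {X : Type*} [TopologicalSpace X]

lemma finite_mem' {I : Set (Set ℕ)} (hI : IsIdeal I) {A : Set ℕ} (hA : A.Finite) : A ∈ I := by
  obtain ⟨s, rfl⟩ := hA.exists_finset_coe
  classical
  induction s using Finset.induction_on with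
  | empty => exact hI.1 (hI.2.2.1 0) (by simp)
  | @insert a s _ ih =>
    rw [Finset.coe_insert, Set.insert_eq]
    exact hI.2.1 (hI.2.2.1 a) (ih (Set.toFinite _))

lemma limit_subset' {X : Type*} [TopologicalSpace X] {I : Set (Set ℕ)} (hI : IsIdeal I)
    {x y : ℕ → X} (hxy : {n | x n ≠ y n} ∈ I) : ILimitPts I x ⊆ ILimitPts I y := by
  rintro l ⟨e, he, hre, hl⟩
  set D := {n | x n ≠ y n} with hD
  set S := Set.range e \ D with hSdef
  have hS : S ∉ I := by
    intro h
    exact hre (hI.1 (hI.2.1 h hxy) (fun n hn => by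
      by_cases hd : n ∈ D
      · exact Or.inr hd
      · exact Or.inl ⟨hn, hd⟩))
  have hSinf : S.Infinite := fun hfin => hS (finite_mem' hI hfin)
  have hT : {n | e n ∈ S}.Infinite := by
    intro hfin
    apply hSinf
    have : S ⊆ e '' {n | e n ∈ S} := by
      rintro s hs
      obtain ⟨m, hm⟩ := hs.1
      exact ⟨m, by simpa [hm] using hs, hm⟩
    exact (hfin.image e).subset this
  have hg : StrictMono (Nat.nth (fun n => e n ∈ S)) := Nat.nth_strictMono hT
  refine ⟨e ∘ Nat.nth (fun n => e n ∈ S), he.comp hg, ?_, ?_⟩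
  · have hrange : Set.range (e ∘ Nat.nth (fun n => e n ∈ S)) = S := by
      ext s
      constructor
      · rintro ⟨m, rfl⟩
        exact Nat.nth_mem_of_infinite hT m
      · rintro hs
        obtain ⟨m, hm⟩ := hs.1
        have : m ∈ Set.range (Nat.nth (fun n => e n ∈ S)) := by
          rw [Nat.range_nth_of_infinite hT]
          simpa [hm] using hs
        obtain ⟨k, hk⟩ := this
        exact ⟨k, by simp [Function.comp, hk, hm]⟩
    rw [hrange]; exact hS
  · have heq : y ∘ (e ∘ Nat.nth (fun n => e n ∈ S)) = x ∘ (e ∘ Nat.nth (fun n => e n ∈ S)) := by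
      funext n
      have hmem : e (Nat.nth (fun n => e n ∈ S) n) ∈ S := Nat.nth_mem_of_infinite hT n
      have : e (Nat.nth (fun n => e n ∈ S) n) ∉ D := hmem.2
      simp only [hD, Set.mem_setOf_eq, not_not] at this
      exact this.symm
    rw [show x ∘ (e ∘ Nat.nth (fun n => e n ∈ S)) = (x ∘ e) ∘ Nat.nth (fun n => e n ∈ S) from rfl] at *
    rw [heq]
    exact hl.comp hg.tendsto_atTop

lemma cluster_subset' {X : Type*} [TopologicalSpace X] {I : Set (Set ℕ)} (hI : IsIdeal I)
    {x y : ℕ → X} (hxy : {n | x n ≠ y n} ∈ I) : IClusterPts I x ⊆ IClusterPts I y := by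
  intro l hl U hU hmem
  apply hl U hU
  apply hI.1 (hI.2.1 hmem hxy)
  intro n hn
  by_cases hd : x n = y n
  · exact Or.inl (by simpa [hd] using hn)
  · exact Or.inr hd

theorem stmt9 {X : Type*} [TopologicalSpace X] {I : Set (Set ℕ)} (hI : IsIdeal I)
    {x y : ℕ → X} (hxy : {n | x n ≠ y n} ∈ I) :
    ILimitPts I x = ILimitPts I y ∧ IClusterPts I x = IClusterPts I y := by
  have hyx : {n | y n ≠ x n} ∈ I := by
    have : {n | y n ≠ x n} = {n | x n ≠ y n} := by ext n; simp [ne_comm]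
    rw [this]; exact hxy
  exact ⟨Set.Subset.antisymm (limit_subset' hI hxy) (limit_subset' hI hyx),
    Set.Subset.antisymm (cluster_subset' hI hxy) (cluster_subset' hI hyx)⟩
end

section
/- Let X be a topological space, I an ideal on ω, K ⊆ X a compact set, and x a sequence in X with {n : x_n ∈ K} ∉ I. Then x has an I-cluster point belonging to K, i.e., Γ_x(I) ∩ K ≠ ∅. -/
open Filter Topology

variable {X : Type*} [TopologicalSpace X]

lemma biUnion_mem_ideal {I : Set (Set ℕ)}
    (hsub : ∀ ⦃A B : Set ℕ⦄, A ∈ I → B ⊆ A → B ∈ I)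
    (hunion : ∀ ⦃A B : Set ℕ⦄, A ∈ I → B ∈ I → A ∪ B ∈ I)
    (hempty : (∅ : Set ℕ) ∈ I) {α : Type*} (t : Finset α) (A : α → Set ℕ)
    (h : ∀ l ∈ t, A l ∈ I) : (⋃ l ∈ t, A l) ∈ I := by
  classical
  induction t using Finset.induction with
  | empty => simpa using hempty
  | @insert a s ha ih =>
    rw [Finset.set_biUnion_insert]
    exact hunion (h a (Finset.mem_insert_self a s))
      (ih fun l hl => h l (Finset.mem_insert_of_mem hl))

theorem stmt10 {X : Type*} [TopologicalSpace X] {I : Set (Set ℕ)} (hI : IsIdeal I)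
    {K : Set X} (hK : IsCompact K) {x : ℕ → X} (hx : {n | x n ∈ K} ∉ I) :
    (IClusterPts I x ∩ K).Nonempty := by
  obtain ⟨hsub, hunion, hsing, -⟩ := hI
  have hempty : (∅ : Set ℕ) ∈ I := hsub (hsing 0) (Set.empty_subset _)
  by_contra h
  rw [Set.not_nonempty_iff_eq_empty] at h
  have hU : ∀ l ∈ K, ∃ U ∈ 𝓝 l, {n | x n ∈ U} ∈ I := by
    intro l hl
    by_contra hc
    push_neg at hc
    have : l ∈ IClusterPts I x ∩ K := ⟨fun U hU => hc U hU, hl⟩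
    rw [h] at this
    exact this
  choose! U hU1 hU2 using hU
  obtain ⟨t, htK, hcov⟩ := hK.elim_nhds_subcover U hU1
  have hun : (⋃ l ∈ t, {n | x n ∈ U l}) ∈ I :=
    biUnion_mem_ideal hsub hunion hempty t _ fun l hl => hU2 l (htK l hl)
  refine hx (hsub hun ?_)
  intro n hn
  obtain ⟨l, hl, hnl⟩ := Set.mem_iUnion₂.mp (hcov hn)
  exact Set.mem_iUnion₂.mpr ⟨l, hl, hnl⟩
end

section
/- Let X be a Hausdorff topological space, I an ideal on ω, and x a sequence in X that is I*-convergent to ℓ. Then Λ_x(I) = Γ_x(I) = {ℓ}. -/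
open Filter Topology

variable {X : Type*} [TopologicalSpace X]

lemma finite_mem_ideal {I : Set (Set ℕ)} (hI : IsIdeal I) {S : Set ℕ} (hS : S.Finite) :
    S ∈ I := by
  have hfin : ∀ s : Finset ℕ, (↑s : Set ℕ) ∈ I := by
    intro s
    induction s using Finset.induction_on with
    | empty => exact hI.1 (hI.2.2.1 0) (by rw [Finset.coe_empty]; exact Set.empty_subset _)
    | @insert a s _ ih =>
      have : ({a} : Set ℕ) ∪ ↑s ∈ I := hI.2.1 (hI.2.2.1 a) ih
      rw [Finset.coe_insert, Set.insert_eq]; exact this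
  have := hfin hS.toFinset
  rwa [Set.Finite.coe_toFinset] at this

lemma cluster_of_subseq {I : Set (Set ℕ)} (hI : IsIdeal I) {x : ℕ → X} {l' : X}
    {f : ℕ → ℕ} (hr : Set.range f ∉ I)
    (ht : Tendsto (x ∘ f) atTop (𝓝 l')) : l' ∈ IClusterPts I x := by
  intro U hU hmem
  obtain ⟨N, hN⟩ := (ht.eventually_mem hU).exists_forall_of_atTop
  have hsub : Set.range f ⊆ {n | x n ∈ U} ∪ f '' Set.Iio N := by
    rintro m ⟨k, rfl⟩
    rcases le_or_gt N k with hk | hk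
    · exact Or.inl (hN k hk)
    · exact Or.inr ⟨k, hk, rfl⟩
  exact hr (hI.1 (hI.2.1 hmem (finite_mem_ideal hI ((Set.finite_Iio N).image f))) hsub)

theorem stmt11 {X : Type*} [TopologicalSpace X] [T2Space X] {I : Set (Set ℕ)}
    (hI : IsIdeal I) {x : ℕ → X} {l : X} (h : IStarConv I x l) :
    ILimitPts I x = {l} ∧ IClusterPts I x = {l} := by
  obtain ⟨e, he, hec, het⟩ := h
  have hrange : Set.range e ∉ I := by
    intro hr
    have : (Set.univ : Set ℕ) ∈ I := by
      have := hI.2.1 hr hec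
      simpa [Set.union_compl_self] using this
    exact hI.2.2.2 this
  have hlC : l ∈ IClusterPts I x := cluster_of_subseq hI hrange het
  have hCl : IClusterPts I x ⊆ {l} := by
    intro l' hl'
    simp only [IClusterPts, Set.mem_setOf_eq] at hl'
    by_contra hne
    obtain ⟨U', V, hU', hV, hl'U, hlV, hdisj⟩ := t2_separation (Set.mem_singleton_iff.not.mp hne)
    obtain ⟨N, hN⟩ := (het.eventually_mem (hV.mem_nhds hlV)).exists_forall_of_atTop
    have hsub : {n | x n ∈ U'} ⊆ (Set.range e)ᶜ ∪ e '' Set.Iio N := by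
      intro n hn
      by_cases hne' : n ∈ Set.range e
      · obtain ⟨k, rfl⟩ := hne'
        rcases le_or_gt N k with hk | hk
        · exact absurd (hdisj.ne_of_mem hn (hN k hk)) (fun hcon => hcon rfl)
        · exact Or.inr ⟨k, hk, rfl⟩
      · exact Or.inl hne'
    exact hl' U' (hU'.mem_nhds hl'U)
      (hI.1 (hI.2.1 hec (finite_mem_ideal hI ((Set.finite_Iio N).image e))) hsub)
  have hLC : ILimitPts I x ⊆ IClusterPts I x := by
    rintro l' ⟨f, hf, hfr, hft⟩
    exact cluster_of_subseq hI hfr hft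
  constructor
  · apply Set.Subset.antisymm (hLC.trans hCl)
    intro y hy
    rw [Set.mem_singleton_iff] at hy; subst hy
    exact ⟨e, he, hrange, het⟩
  · exact Set.Subset.antisymm hCl (by rintro y rfl; exact hlC)
end

section
/- Let I be a P-ideal on ω, X a first countable Hausdorff space, and x a sequence in X that is I-convergent to ℓ. Then Λ_x(I) = Γ_x(I) = {ℓ}. -/
open Filter Topology

variable {X : Type*} [TopologicalSpace X]

theorem stmt12 {X : Type*} [TopologicalSpace X] [T2Space X]
    [FirstCountableTopology X] {I : Set (Set ℕ)} (hI : IsPIdeal I)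
    {x : ℕ → X} {l : X} (h : IConv I x l) :
    ILimitPts I x = {l} ∧ IClusterPts I x = {l} := by
  obtain ⟨⟨hdown, hunion, hsing, huniv⟩, hP⟩ := hI
  have hfin : ∀ S : Set ℕ, S.Finite → S ∈ I := by
    intro S hS
    refine Set.Finite.induction_on (motive := fun S _ => S ∈ I) S hS
      (hdown (hsing 0) (Set.empty_subset _)) ?_
    intro a s _ _ ih
    exact Set.insert_eq _ _ ▸ hunion (hsing _) ih
  -- Γ ⊆ {l}
  have hΓsub : IClusterPts I x ⊆ {l} := by
    intro l' hl'
    by_contra hne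
    have hne' : l' ≠ l := hne
    obtain ⟨U, V, hUo, hVo, hl'U, hlV, hUV⟩ := t2_separation hne'
    refine hl' U (hUo.mem_nhds hl'U) (hdown (h V (hVo.mem_nhds hlV)) ?_)
    intro n hn
    simp only [Set.mem_setOf_eq] at hn ⊢
    exact fun hV => Set.disjoint_left.mp hUV hn hV
  -- Λ ⊆ Γ
  have hΛΓ : ILimitPts I x ⊆ IClusterPts I x := by
    rintro l' ⟨e, he, hrange, htend⟩ U hU hUI
    obtain ⟨N, hN⟩ := (htend.eventually_mem hU).exists_forall_of_atTop
    apply hrange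
    refine hdown (hunion (hfin (e '' Set.Iio N) ((Set.finite_Iio N).image e)) hUI) ?_
    rintro _ ⟨m, rfl⟩
    rcases lt_or_ge m N with hm | hm
    · exact Or.inl ⟨m, hm, rfl⟩
    · exact Or.inr (hN m hm)
  -- l ∈ Γ
  have hlΓ : l ∈ IClusterPts I x := by
    intro U hU hmem
    apply huniv
    have : (Set.univ : Set ℕ) = {n | x n ∈ U} ∪ {n | x n ∉ U} := by
      ext n; by_cases hn : x n ∈ U <;> simp [hn]
    rw [this]
    exact hunion hmem (h U hU)
  -- l ∈ Λ (needs P-ideal + first countability)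
  have hlΛ : l ∈ ILimitPts I x := by
    obtain ⟨U, hU⟩ := (𝓝 l).exists_antitone_basis
    obtain ⟨B, hB, hBfin⟩ := hP (fun k => {n | x n ∉ U k})
      (fun k => h (U k) (hU.mem k))
    have hBc : Bᶜ ∉ I := by
      intro hc
      exact huniv (by simpa using hunion hB hc)
    have hBcinf : Bᶜ.Infinite := fun hfinB => hBc (hfin _ hfinB)
    set e := Nat.nth (· ∈ Bᶜ)
    have hmono : StrictMono e := Nat.nth_strictMono hBcinf
    have hrange : Set.range e = Bᶜ := Nat.range_nth_of_infinite hBcinf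
    refine ⟨e, hmono, hrange ▸ hBc, ?_⟩
    rw [hU.toHasBasis.tendsto_right_iff]
    intro k _
    have hpre : {m | e m ∈ {n | x n ∉ U k}}.Finite := by
      have hsub : {m | e m ∈ {n | x n ∉ U k}} ⊆ e ⁻¹' ({n | x n ∉ U k} \ B) := by
        intro m hm
        refine ⟨hm, ?_⟩
        have : e m ∈ Bᶜ := hrange ▸ Set.mem_range_self m
        exact this
      exact ((hBfin k).preimage (hmono.injective.injOn)).subset hsub
    have := hpre.eventually_cofinite_notMem
    rw [Nat.cofinite_eq_atTop] at this
    filter_upwards [this] with m hm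
    simpa using hm
  refine ⟨?_, Set.Subset.antisymm hΓsub (by rintro _ rfl; exact hlΓ)⟩
  exact Set.Subset.antisymm (fun l' hl' => hΓsub (hΛΓ hl'))
    (by rintro _ rfl; exact hlΛ)
end

section
/- Let X be a topological additive group, I an ideal on ω, and x, y sequences in X such that the sequence (x_n − y_n) is I-convergent to 0. Then x and y have the same I-cluster points: Γ_x(I) = Γ_y(I). -/
open Filter Topology

variable {X : Type*} [TopologicalSpace X]

lemma aux_subset {X : Type*} [AddGroup X] [TopologicalSpace X] [IsTopologicalAddGroup X]
    {I : Set (Set ℕ)} (hI : IsIdeal I) {x y : ℕ → X}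
    (h : IConv I (fun n => x n - y n) 0) :
    IClusterPts I x ⊆ IClusterPts I y := by
  intro l hl U hU
  have hc : Filter.Tendsto (fun p : X × X => -p.1 + p.2) (𝓝 (0 : X) ×ˢ 𝓝 l) (𝓝 l) := by
    have : Continuous fun p : X × X => -p.1 + p.2 :=
      (continuous_neg.comp continuous_fst).add continuous_snd
    have h2 := this.tendsto ((0:X), l)
    simpa [nhds_prod_eq] using h2
  have hU' : U ∈ Filter.map (fun p : X × X => -p.1 + p.2) (𝓝 (0:X) ×ˢ 𝓝 l) := hc hU
  rcases Filter.mem_prod_iff.mp hU' with ⟨W, hW, V, hV, hVW⟩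
  intro hbad
  have hWI : {n | x n - y n ∉ W} ∈ I := h W hW
  have hsub : {n | x n ∈ V} ⊆ {n | y n ∈ U} ∪ {n | x n - y n ∉ W} := by
    intro n hn
    by_cases hw : x n - y n ∈ W
    · left
      show y n ∈ U
      have hmem : -(x n - y n) + x n ∈ U := hVW (Set.mk_mem_prod hw hn)
      have key : -(x n - y n) + x n = y n := by
        simp [sub_eq_add_neg, neg_add_rev, add_assoc]
      rwa [key] at hmem
    · right; exact hw
  exact hl V hV (hI.1 (hI.2.1 hbad hWI) hsub)

theorem stmt15 {X : Type*} [AddGroup X] [TopologicalSpace X] [IsTopologicalAddGroup X]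
    {I : Set (Set ℕ)} (hI : IsIdeal I) {x y : ℕ → X}
    (h : IConv I (fun n => x n - y n) 0) :
    IClusterPts I x = IClusterPts I y := by
  have h' : IConv I (fun n => y n - x n) 0 := by
    intro W hW
    have hW' : -W ∈ 𝓝 (0 : X) := by simpa using neg_mem_nhds_zero X hW
    have := h (-W) hW'
    have heq : {n | (fun n => y n - x n) n ∉ W} = {n | (fun n => x n - y n) n ∉ -W} := by
      ext n; simp [neg_sub]
    rw [heq]; exact this
  exact Set.Subset.antisymm (aux_subset hI h) (aux_subset hI h')
end
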